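/- Let y₁ < y₂ < ... < yₙ (n > 4) and consider P₁' = {y₁,...,y_{i−1}, y_{i+1}} and P₂' = {yᵢ, y_{i+2},...,yₙ} obtained from the contiguous partition P₁* = {y₁,...,yᵢ}, P₂* = {y_{i+1},...,yₙ} by swapping yᵢ and y_{i+1}, where 2 ≤ i ≤ n−2. Then the group means satisfy μ(P₁') = μ(P₁*) + (y_{i+1} − yᵢ)/i > μ(P₁*) and μ(P₂') = μ(P₂*) − (y_{i+1} − yᵢ)/(n−i) < μ(P₂*), and SS(P₁') + SS(P₂') ≥ SS(P₁*) + SS(P₂*). -/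

import Mathlib

open Finset

noncomputable def mu {n : ℕ} (y : Fin n → ℝ) (P : Finset (Fin n)) : ℝ :=
  (∑ j ∈ P, y j) / P.card

noncomputable def SS {n : ℕ} (y : Fin n → ℝ) (P : Finset (Fin n)) : ℝ :=
  ∑ j ∈ P, (y j - mu y P) ^ 2

lemma SS_eq {n : ℕ} (y : Fin n → ℝ) (P : Finset (Fin n)) (hP : P.Nonempty) :
    SS y P = ∑ j ∈ P, (y j)^2 - P.card * (mu y P)^2 := by
  have hc : (P.card : ℝ) ≠ 0 := Nat.cast_ne_zero.2 (Finset.card_ne_zero.2 hP)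
  have hm : (P.card : ℝ) * mu y P = ∑ j ∈ P, y j := by unfold mu; field_simp
  unfold SS
  have h : ∀ j ∈ P, (y j - mu y P)^2 = (y j)^2 - 2*mu y P*y j + (mu y P)^2 :=
    fun j _ => by ring
  rw [sum_congr rfl h, sum_add_distrib, sum_sub_distrib, ← mul_sum, ← hm,
    sum_const, nsmul_eq_mul]
  ring

lemma key_ineq (ci cn μ1 μ2 d : ℝ) (hci : 2 ≤ ci) (hcn : 2 ≤ cn) (hd : 0 < d)
    (h12 : d ≤ μ2 - μ1) :
    ci*(μ1 + d/ci)^2 + cn*(μ2 - d/cn)^2 ≤ ci*μ1^2 + cn*μ2^2 := by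
  have hci0 : (0:ℝ) < ci := by linarith
  have hcn0 : (0:ℝ) < cn := by linarith
  have e1 : ci*(μ1 + d/ci)^2 = ci*μ1^2 + 2*μ1*d + d^2/ci := by field_simp; ring
  have e2 : cn*(μ2 - d/cn)^2 = cn*μ2^2 - 2*μ2*d + d^2/cn := by field_simp; ring
  have h3 : d^2/ci ≤ d^2/2 := by gcongr
  have h4 : d^2/cn ≤ d^2/2 := by gcongr
  have h5 : 2*d*d ≤ 2*d*(μ2-μ1) := by nlinarith
  rw [e1, e2]
  nlinarith [sq_nonneg d]

theorem stmt_13 (n i : ℕ) (hn : 4 < n) (hi : 2 ≤ i) (hi' : i ≤ n - 2)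
    (y : Fin n → ℝ) (hy : StrictMono y)
    (P₁s P₂s P₁' P₂' : Finset (Fin n))
    (hP₁s : P₁s = univ.filter (fun j : Fin n => (j : ℕ) < i))
    (hP₂s : P₂s = univ.filter (fun j : Fin n => i ≤ (j : ℕ)))
    (hP₁' : P₁' = insert ⟨i, by omega⟩ (P₁s.erase ⟨i - 1, by omega⟩))
    (hP₂' : P₂' = insert ⟨i - 1, by omega⟩ (P₂s.erase ⟨i, by omega⟩)) :
    mu y P₁' = mu y P₁s + (y ⟨i, by omega⟩ - y ⟨i - 1, by omega⟩) / i ∧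
    mu y P₁s < mu y P₁' ∧
    mu y P₂' = mu y P₂s - (y ⟨i, by omega⟩ - y ⟨i - 1, by omega⟩) / (n - i) ∧
    mu y P₂' < mu y P₂s ∧
    SS y P₁s + SS y P₂s ≤ SS y P₁' + SS y P₂' := by
  have hin : i < n := by omega
  set a : Fin n := ⟨i - 1, by omega⟩ with ha
  set b : Fin n := ⟨i, by omega⟩ with hb
  have hcard1 : P₁s.card = i := by
    have : P₁s = Iio b := by ext j; simp [hP₁s, Fin.lt_def, hb]
    rw [this, Fin.card_Iio]
  have hcard2 : P₂s.card = n - i := by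
    have : P₂s = Ici b := by ext j; simp [hP₂s, Fin.le_def, hb]
    rw [this, Fin.card_Ici]
  have haP1 : a ∈ P₁s := by simp [hP₁s, ha]; omega
  have hbP1 : b ∉ P₁s := by simp [hP₁s, hb]
  have hbP2 : b ∈ P₂s := by simp [hP₂s, hb]
  have haP2 : a ∉ P₂s := by simp [hP₂s, ha]; omega
  have hab : a < b := by simp [Fin.lt_def, ha, hb]; omega
  have hd : 0 < y b - y a := sub_pos.2 (hy hab)
  have hbne : b ∉ P₁s.erase a := fun h => hbP1 (mem_of_mem_erase h)
  have hane : a ∉ P₂s.erase b := fun h => haP2 (mem_of_mem_erase h)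
  have hcard1' : P₁'.card = i := by
    rw [hP₁', card_insert_of_notMem hbne, card_erase_of_mem haP1, hcard1]; omega
  have hcard2' : P₂'.card = n - i := by
    rw [hP₂', card_insert_of_notMem hane, card_erase_of_mem hbP2, hcard2]; omega
  have hsum1 : ∀ f : Fin n → ℝ, ∑ j ∈ P₁', f j = ∑ j ∈ P₁s, f j - f a + f b := by
    intro f
    rw [hP₁', sum_insert hbne, Finset.sum_erase_eq_sub haP1]; ring
  have hsum2 : ∀ f : Fin n → ℝ, ∑ j ∈ P₂', f j = ∑ j ∈ P₂s, f j - f b + f a := by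
    intro f
    rw [hP₂', sum_insert hane, Finset.sum_erase_eq_sub hbP2]; ring
  have hipos : (0:ℝ) < i := by
    have : (0:ℕ) < i := by omega
    exact_mod_cast this
  have hcs : ((n - i : ℕ) : ℝ) = (n:ℝ) - i := by
    rw [Nat.cast_sub hin.le]
  have hnipos : (0:ℝ) < (n:ℝ) - i := by
    have : (i:ℝ) < n := by exact_mod_cast hin
    linarith
  have g1 : mu y P₁' = mu y P₁s + (y b - y a) / i := by
    unfold mu
    rw [hsum1 y, hcard1, hcard1']
    field_simp
    ring
  have g3 : mu y P₂' = mu y P₂s - (y b - y a) / ((n:ℝ) - i) := by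
    unfold mu
    rw [hsum2 y, hcard2, hcard2', hcs]
    field_simp
    ring
  have g2 : mu y P₁s < mu y P₁' := by
    rw [g1]
    have : 0 < (y b - y a) / i := div_pos hd hipos
    linarith
  have g4 : mu y P₂' < mu y P₂s := by
    rw [g3]
    have : 0 < (y b - y a) / ((n:ℝ) - i) := div_pos hd hnipos
    linarith
  refine ⟨g1, g2, ?_, g4, ?_⟩
  · rw [g3]
  · have hne1 : P₁s.Nonempty := card_pos.mp (by omega)
    have hne2 : P₂s.Nonempty := card_pos.mp (by omega)
    have hne1' : P₁'.Nonempty := card_pos.mp (by omega)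
    have hne2' : P₂'.Nonempty := card_pos.mp (by omega)
    have hμ1 : mu y P₁s ≤ y a := by
      have hsle : ∑ j ∈ P₁s, y j ≤ i * y a := by
        calc ∑ j ∈ P₁s, y j ≤ ∑ _j ∈ P₁s, y a := by
              refine sum_le_sum fun j hj => hy.monotone ?_
              rw [hP₁s, mem_filter] at hj
              rw [Fin.le_def]
              simp only [ha]
              omega
          _ = i * y a := by rw [sum_const, hcard1, nsmul_eq_mul]
      unfold mu
      rw [hcard1, div_le_iff₀ hipos]
      linarith
    have hμ2 : y b ≤ mu y P₂s := by
      have hsle : ((n:ℝ) - i) * y b ≤ ∑ j ∈ P₂s, y j := by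
        calc ((n:ℝ) - i) * y b = ∑ _j ∈ P₂s, y b := by
              rw [sum_const, hcard2, nsmul_eq_mul, hcs]
          _ ≤ ∑ j ∈ P₂s, y j := by
              refine sum_le_sum fun j hj => hy.monotone ?_
              rw [hP₂s, mem_filter] at hj
              rw [Fin.le_def]
              simp only [hb]
              omega
      unfold mu
      rw [hcard2, hcs, le_div_iff₀ hnipos]
      linarith
    have hci : (2:ℝ) ≤ i := by exact_mod_cast hi
    have hcn : (2:ℝ) ≤ (n:ℝ) - i := by
      have : ((i:ℝ)) + 2 ≤ n := by exact_mod_cast (show i + 2 ≤ n by omega)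
      linarith
    have key := key_ineq (i:ℝ) ((n:ℝ) - i) (mu y P₁s) (mu y P₂s) (y b - y a)
      hci hcn hd (by linarith)
    rw [SS_eq y P₁s hne1, SS_eq y P₂s hne2, SS_eq y P₁' hne1', SS_eq y P₂' hne2',
      hsum1 (fun j => (y j)^2), hsum2 (fun j => (y j)^2),
      hcard1, hcard2, hcard1', hcard2', hcs, g1, g3]
    linarith
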